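/- A double ascent σ of length n is a single ascent (the identity/increasing permutation) if and only if its set of associated words over {l, r} equals {l^a r^c : a + c = n, a, c ≥ 0}. In particular, a double ascent σ has more than one associated word if and only if σ is a single ascent. -/

import Mathlib

/-- The permutation (as the list of values read by position, 0-indexed) associated
with a word over `{l, r}` (encoded `l = true`, `r = false`). -/
def assocPerm (w : List Bool) : List ℕ :=
  ((List.range w.length).filter fun i => w.getD i false) ++
    ((List.range w.length).filter fun i => !(w.getD i false))

/-- The number of consecutive inversions (descents) of a sequence. -/
def descents (s : List ℕ) : ℕ :=
  (s.zip s.tail).countP fun p => decide (p.2 < p.1)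

namespace Stmt16Aux

lemma sorted_lt_range (n : ℕ) : List.Pairwise (· < ·) (List.range n) := List.pairwise_lt_range

lemma eq_of_perm_of_sorted {l₁ l₂ : List ℕ} (hp : l₁.Perm l₂) (h₁ : List.Pairwise (· ≤ ·) l₁)
    (h₂ : List.Pairwise (· ≤ ·) l₂) : l₁ = l₂ := List.Perm.eq_of_pairwise' h₁ h₂ hp

/-- Positions holding `l = true`, in increasing order. -/
def Tl (w : List Bool) : List ℕ := (List.range w.length).filter fun i => w.getD i false

/-- Positions holding `r = false`, in increasing order. -/
def Fl (w : List Bool) : List ℕ := (List.range w.length).filter fun i => !(w.getD i false)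

lemma assoc_eq (w : List Bool) : assocPerm w = Tl w ++ Fl w := rfl

lemma assoc_perm (w : List Bool) : (assocPerm w).Perm (List.range w.length) :=
  List.filter_append_perm _ _

lemma assoc_length (w : List Bool) : (assocPerm w).length = w.length := by
  simpa using (assoc_perm w).length_eq

lemma mem_Tl {w : List Bool} {i : ℕ} :
    i ∈ Tl w ↔ i < w.length ∧ w.getD i false = true := by
  simp [Tl, List.mem_filter, List.mem_range]

lemma mem_Fl {w : List Bool} {i : ℕ} :
    i ∈ Fl w ↔ i < w.length ∧ w.getD i false = false := by
  simp [Fl, List.mem_filter, List.mem_range]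

lemma Tl_sorted (w : List Bool) : List.Pairwise (· < ·) (Tl w) :=
  (sorted_lt_range _).filter _

lemma Fl_sorted (w : List Bool) : List.Pairwise (· < ·) (Fl w) :=
  (sorted_lt_range _).filter _

lemma Tl_nodup (w : List Bool) : (Tl w).Nodup :=
  (List.nodup_range).filter _

lemma take_assoc (w : List Bool) : (assocPerm w).take (Tl w).length = Tl w := by
  rw [assoc_eq]; exact List.take_left

lemma drop_assoc (w : List Bool) : (assocPerm w).drop (Tl w).length = Fl w := by
  rw [assoc_eq]; exact List.drop_left

lemma Tl_length_le (w : List Bool) : (Tl w).length ≤ w.length := by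
  simpa [Tl] using List.length_filter_le (fun i => w.getD i false) (List.range w.length)

lemma getD_lr {i a c : ℕ} (h : i < a + c) :
    (List.replicate a true ++ List.replicate c false).getD i false = decide (i < a) := by
  by_cases hia : i < a
  · rw [List.getD_append _ _ _ i (by simpa using hia),
      List.getD_eq_getElem _ _ (by simpa using hia), List.getElem_replicate]
    simp [hia]
  · rw [List.getD_append_right _ _ _ i (by simpa using Nat.le_of_not_lt hia),
      List.getD_eq_getElem _ _ (by simp; omega), List.getElem_replicate]
    simp [hia]

lemma Tl_lr (a c : ℕ) :
    Tl (List.replicate a true ++ List.replicate c false) = List.range a := by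
  have hmem : ∀ i, i ∈ Tl (List.replicate a true ++ List.replicate c false) ↔
      i ∈ List.range a := by
    intro i
    rw [mem_Tl, List.mem_range]
    constructor
    · rintro ⟨hi, hd⟩
      have hi' : i < a + c := by simpa using hi
      rw [getD_lr hi'] at hd
      simpa using hd
    · intro hi
      have hi' : i < a + c := by omega
      refine ⟨by simpa using hi', ?_⟩
      rw [getD_lr hi']
      simpa using hi
  exact eq_of_perm_of_sorted
    ((List.perm_ext_iff_of_nodup (Tl_nodup _) (List.nodup_range)).2 hmem)
    ((Tl_sorted _).imp le_of_lt) ((sorted_lt_range _).imp le_of_lt)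

lemma assoc_lr (a c : ℕ) :
    assocPerm (List.replicate a true ++ List.replicate c false) = List.range (a + c) := by
  set w := List.replicate a true ++ List.replicate c false with hw
  have hlen : w.length = a + c := by simp [hw]
  have hsorted : List.Pairwise (· ≤ ·) (assocPerm w) := by
    rw [assoc_eq]
    rw [List.pairwise_append]
    refine ⟨((Tl_sorted w).imp le_of_lt), ((Fl_sorted w).imp le_of_lt), ?_⟩
    intro t ht f hf
    rw [mem_Tl] at ht
    rw [mem_Fl] at hf
    have ht' : t < a := by
      have := ht.2
      rw [getD_lr (by rw [← hlen]; exact ht.1)] at this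
      simpa using this
    have hf' : a ≤ f := by
      have := hf.2
      rw [getD_lr (by rw [← hlen]; exact hf.1)] at this
      simpa using this
    omega
  have hperm : (assocPerm w).Perm (List.range (a + c)) := by
    rw [← hlen]; exact assoc_perm w
  exact eq_of_perm_of_sorted hperm hsorted ((sorted_lt_range _).imp le_of_lt)

lemma word_eq (w₁ w₂ : List Bool) (h : assocPerm w₁ = assocPerm w₂)
    (hk : (Tl w₁).length = (Tl w₂).length) : w₁ = w₂ := by
  have hlen : w₁.length = w₂.length := by
    rw [← assoc_length, h, assoc_length]
  refine List.ext_getElem hlen fun i h1 h2 => ?_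
  have m1 : i ∈ Tl w₁ ↔ w₁[i] = true := by
    rw [mem_Tl, List.getD_eq_getElem _ _ h1]
    exact ⟨fun h => h.2, fun h => ⟨h1, h⟩⟩
  have m2 : i ∈ Tl w₂ ↔ w₂[i] = true := by
    rw [mem_Tl, List.getD_eq_getElem _ _ h2]
    exact ⟨fun h => h.2, fun h => ⟨h2, h⟩⟩
  have mt : i ∈ Tl w₁ ↔ i ∈ Tl w₂ := by
    rw [← take_assoc w₁, ← take_assoc w₂, h, hk]
  rw [Bool.eq_iff_iff, ← m1, ← m2]
  exact mt

lemma sorted_of_lt (w₁ w₂ : List Bool) (h : assocPerm w₁ = assocPerm w₂)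
    (hk : (Tl w₁).length < (Tl w₂).length) : List.Pairwise (· ≤ ·) (assocPerm w₁) := by
  obtain ⟨σ, hσ⟩ : ∃ σ, assocPerm w₁ = σ := ⟨_, rfl⟩
  obtain ⟨k₁, hk₁⟩ : ∃ k, (Tl w₁).length = k := ⟨_, rfl⟩
  obtain ⟨k₂, hk₂⟩ : ∃ k, (Tl w₂).length = k := ⟨_, rfl⟩
  rw [hk₁, hk₂] at hk
  have hst : List.Pairwise (· < ·) (σ.take k₂) := by
    rw [← hσ, ← hk₂, h, take_assoc]; exact Tl_sorted w₂
  have hsd : List.Pairwise (· < ·) (σ.drop k₁) := by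
    rw [← hσ, ← hk₁, drop_assoc]; exact Fl_sorted w₁
  have helper1 : ∀ i j (hi : i < σ.length) (hj : j < σ.length),
      i < j → j < k₂ → σ[i] < σ[j] := by
    intro i j hi hj hij hjk
    have hi' : i < (σ.take k₂).length := by simp; omega
    have hj' : j < (σ.take k₂).length := by simp; omega
    have := (List.pairwise_iff_getElem.1 hst) i j hi' hj' hij
    rwa [List.getElem_take, List.getElem_take] at this
  have helper2 : ∀ i j (hi : i < σ.length) (hj : j < σ.length),
      k₁ ≤ i → i < j → σ[i] < σ[j] := by
    intro i j hi hj hki hij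
    obtain ⟨i', rfl⟩ : ∃ i', i = k₁ + i' := ⟨i - k₁, by omega⟩
    obtain ⟨j', rfl⟩ : ∃ j', j = k₁ + j' := ⟨j - k₁, by omega⟩
    have hi' : i' < (σ.drop k₁).length := by simp; omega
    have hj' : j' < (σ.drop k₁).length := by simp; omega
    have := (List.pairwise_iff_getElem.1 hsd) i' j' hi' hj' (by omega)
    rwa [List.getElem_drop, List.getElem_drop] at this
  rw [hσ, List.pairwise_iff_getElem]
  intro i j hi hj hij
  by_cases hjk : j < k₂
  · exact le_of_lt (helper1 i j hi hj hij hjk)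
  · have hk2j : k₂ ≤ j := Nat.le_of_not_lt hjk
    by_cases hik : k₁ ≤ i
    · exact le_of_lt (helper2 i j hi hj hik hij)
    · have hik' : i < k₁ := Nat.lt_of_not_le hik
      have hk1l : k₁ < σ.length := by omega
      have h1 : σ[i] < σ[k₁]'hk1l := helper1 i k₁ hi hk1l hik' hk
      have h2 : σ[k₁]'hk1l < σ[j] := helper2 k₁ j hk1l hj le_rfl (by omega)
      exact le_of_lt (h1.trans h2)

lemma assoc_rep_true (n : ℕ) : assocPerm (List.replicate n true) = List.range n := by
  have := assoc_lr n 0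
  simpa using this

lemma assoc_rep_false (n : ℕ) : assocPerm (List.replicate n false) = List.range n := by
  have := assoc_lr 0 n
  simpa using this

end Stmt16Aux

open Stmt16Aux in
/-- A double ascent `σ` of length `n ≥ 1` is the single (increasing)
ascent iff its set of associated words is `{lᵃ rᶜ : a + c = n}`; equivalently, `σ`
has more than one associated word iff `σ` is the single ascent. -/
theorem stmt16 (n : ℕ) (hn : 1 ≤ n) (σ : List ℕ)
    (hperm : σ.Perm (List.range n)) (hda : descents σ ≤ 1) :
    ((σ = List.range n) ↔
      {w : List Bool | w ≠ [] ∧ assocPerm w = σ} =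
        {w : List Bool | ∃ a c : ℕ, a + c = n ∧
          w = List.replicate a true ++ List.replicate c false}) ∧
    ((∃ w₁ w₂ : List Bool, w₁ ≠ w₂ ∧ (w₁ ≠ [] ∧ assocPerm w₁ = σ) ∧
        (w₂ ≠ [] ∧ assocPerm w₂ = σ)) ↔ σ = List.range n) := by
  have hσlen : σ.length = n := by simpa using hperm.length_eq
  have wlen : ∀ w : List Bool, assocPerm w = σ → w.length = n := fun w hw => by
    rw [← assoc_length, hw, hσlen]
  have key : ∀ w₁ w₂ : List Bool, assocPerm w₁ = σ → assocPerm w₂ = σ → w₁ ≠ w₂ →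
      σ = List.range n := by
    intro w₁ w₂ h1 h2 hne
    have h12 : assocPerm w₁ = assocPerm w₂ := h1.trans h2.symm
    rcases lt_trichotomy (Tl w₁).length (Tl w₂).length with hk | hk | hk
    · have hs := sorted_of_lt w₁ w₂ h12 hk
      rw [h1] at hs
      exact eq_of_perm_of_sorted hperm hs ((sorted_lt_range n).imp le_of_lt)
    · exact absurd (word_eq w₁ w₂ h12 hk) hne
    · have hs := sorted_of_lt w₂ w₁ h12.symm hk
      rw [h2] at hs
      exact eq_of_perm_of_sorted hperm hs ((sorted_lt_range n).imp le_of_lt)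
  constructor
  · constructor
    · intro hσ
      ext w
      simp only [Set.mem_setOf_eq]
      constructor
      · rintro ⟨hne, hw⟩
        have hwn : w.length = n := wlen w hw
        have ha : (Tl w).length ≤ n := hwn ▸ Tl_length_le w
        refine ⟨(Tl w).length, n - (Tl w).length, by omega, ?_⟩
        apply word_eq
        · rw [hw, hσ, assoc_lr]
          congr 1
          omega
        · rw [Tl_lr]
          simp
      · rintro ⟨a, c, hac, rfl⟩
        constructor
        · intro heq
          have : a + c = 0 := by simpa using congrArg List.length heq
          omega
        · rw [assoc_lr, hac, hσ]
      -- end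
    · intro hset
      have hmem : (List.replicate n true : List Bool) ∈
          {w : List Bool | ∃ a c : ℕ, a + c = n ∧
            w = List.replicate a true ++ List.replicate c false} :=
        ⟨n, 0, by omega, by simp⟩
      rw [← hset] at hmem
      obtain ⟨-, hw⟩ := hmem
      rw [assoc_rep_true] at hw
      exact hw.symm
  · constructor
    · rintro ⟨w₁, w₂, hne, ⟨-, h1⟩, ⟨-, h2⟩⟩
      exact key w₁ w₂ h1 h2 hne
    · intro hσ
      refine ⟨List.replicate n true, List.replicate n false, ?_, ⟨?_, ?_⟩, ⟨?_, ?_⟩⟩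
      · obtain ⟨m, rfl⟩ : ∃ m, n = m + 1 := ⟨n - 1, by omega⟩
        simp [List.replicate_succ]
      · simp; omega
      · rw [assoc_rep_true, hσ]
      · simp; omega
      · rw [assoc_rep_false, hσ]
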